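/- Assume the harmonic potential φ(t) = t²/2 and a κ-regular mesh for some κ ≥ 1. Then the Hessian of the non-local QC energy, E_h''[v_h, v_h] = Σ_{k=−K+1}^K h_k (1 + ω̂_k)(V'_k)² with ω̂_k = (h_{k−1} − 2h_k + h_{k+1})/(4h_k), satisfies the two-sided bound (½(1 + κ⁻¹))² ‖v_h'‖_{L²}² ≤ E_h''[v_h, v_h] ≤ (½(1 + κ))² ‖v_h'‖_{L²}² for all v_h ∈ X_h, where ‖v_h'‖_{L²}² = Σ_k h_k (V'_k)². In particular E_h'' is positive definite on X_h. -/

import Mathlib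

/-- `v : ℤ → ℝ` belongs to the coarse space `X_h`. -/
def IsCoarse (N : ℤ) (ε : ℝ) (L : ℤ → ℤ) (v : ℤ → ℝ) : Prop :=
  (∀ l : ℤ, v (l + 2 * N) = v l) ∧ v 0 = 0 ∧
    ∀ k l : ℤ, L (k - 1) ≤ l → l ≤ L k →
      v l = v (L (k - 1)) +
        ε * ((l - L (k - 1) : ℤ) : ℝ) *
          ((v (L k) - v (L (k - 1))) / (ε * ((L k - L (k - 1) : ℤ) : ℝ)))

/-- for the harmonic potential on a κ-regular mesh, the Hessian
of the non-local QC energy satisfies the two-sided bound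
`(½(1+κ⁻¹))² ‖v_h'‖² ≤ E_h''[v_h, v_h] ≤ (½(1+κ))² ‖v_h'‖²`; in particular it
is positive definite on `X_h`. -/
theorem statement11
    (N K : ℤ) (hN : 1 ≤ N) (hK : 1 ≤ K)
    (ε : ℝ) (hε : ε = (N : ℝ)⁻¹)
    (L : ℤ → ℤ) (hmono : StrictMono L) (hL0 : L 0 = 0)
    (hLper : ∀ k : ℤ, L (k + 2 * K) = L k + 2 * N)
    (hsz : ℤ → ℝ) (hhsz : ∀ k : ℤ, hsz k = ε * ((L k - L (k - 1) : ℤ) : ℝ))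
    (κ : ℝ) (hκ : 1 ≤ κ)
    (hreg : ∀ k : ℤ, κ⁻¹ * hsz (k - 1) ≤ hsz k ∧ hsz k ≤ κ * hsz (k - 1))
    (oh : ℤ → ℝ)
    (hoh : ∀ k : ℤ, oh k = (hsz (k - 1) - 2 * hsz k + hsz (k + 1)) / (4 * hsz k))
    (v : ℤ → ℝ) (hv : IsCoarse N ε L v)
    (Vp : ℤ → ℝ) (hVp : ∀ k : ℤ, Vp k = (v (L k) - v (L (k - 1))) / hsz k) :
    ((1 / 2) * (1 + κ⁻¹)) ^ 2 * (∑ k ∈ Finset.Icc (-K + 1) K, hsz k * Vp k ^ 2) ≤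
        (∑ k ∈ Finset.Icc (-K + 1) K, hsz k * ((1 + oh k) * Vp k ^ 2)) ∧
      (∑ k ∈ Finset.Icc (-K + 1) K, hsz k * ((1 + oh k) * Vp k ^ 2)) ≤
        ((1 / 2) * (1 + κ)) ^ 2 * (∑ k ∈ Finset.Icc (-K + 1) K, hsz k * Vp k ^ 2) ∧
      (v ≠ 0 → 0 < ∑ k ∈ Finset.Icc (-K + 1) K, hsz k * ((1 + oh k) * Vp k ^ 2)) := by
  have hκ0 : (0:ℝ) < κ := lt_of_lt_of_le one_pos hκ
  have hκi0 : (0:ℝ) < κ⁻¹ := inv_pos.mpr hκ0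
  have hκi1 : κ⁻¹ ≤ 1 := by
    rw [inv_le_one_iff₀]; right; exact hκ
  have hεpos : 0 < ε := by
    rw [hε]; positivity
  have hpos : ∀ k : ℤ, 0 < hsz k := by
    intro k
    rw [hhsz]
    have : L (k - 1) < L k := hmono (sub_one_lt k)
    have : (0:ℝ) < ((L k - L (k - 1) : ℤ) : ℝ) := by exact_mod_cast sub_pos.mpr this
    positivity
  -- rewrite each summand
  have key : ∀ k : ℤ, hsz k * ((1 + oh k) * Vp k ^ 2)
      = (hsz (k - 1) + 2 * hsz k + hsz (k + 1)) / 4 * Vp k ^ 2 := by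
    intro k
    rw [hoh]
    have h := (hpos k).ne'
    field_simp
    ring
  -- regularity facts
  have hlow : ∀ k : ℤ, κ⁻¹ * hsz k ≤ hsz (k - 1) := by
    intro k
    have h2 := (hreg k).2
    calc κ⁻¹ * hsz k ≤ κ⁻¹ * (κ * hsz (k - 1)) := by
          exact mul_le_mul_of_nonneg_left h2 hκi0.le
      _ = hsz (k - 1) := by field_simp
  have hlow' : ∀ k : ℤ, κ⁻¹ * hsz k ≤ hsz (k + 1) := by
    intro k
    have h1 := (hreg (k + 1)).1
    simpa using h1
  have hup : ∀ k : ℤ, hsz (k - 1) ≤ κ * hsz k := by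
    intro k
    have h1 := (hreg k).1
    calc hsz (k - 1) = κ * (κ⁻¹ * hsz (k - 1)) := by field_simp
      _ ≤ κ * hsz k := mul_le_mul_of_nonneg_left h1 hκ0.le
  have hup' : ∀ k : ℤ, hsz (k + 1) ≤ κ * hsz k := by
    intro k
    have h2 := (hreg (k + 1)).2
    simpa using h2
  have hnonneg : ∀ k : ℤ, 0 ≤ hsz k * ((1 + oh k) * Vp k ^ 2) := by
    intro k
    rw [key]
    have h1 := hpos (k - 1)
    have h2 := hpos k
    have h3 := hpos (k + 1)
    positivity
  refine ⟨?_, ?_, ?_⟩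
  · -- lower bound
    rw [Finset.mul_sum]
    refine Finset.sum_le_sum fun k _ => ?_
    rw [key]
    have h1 := hlow k
    have h2 := hlow' k
    have h3 := hpos k
    have hV := sq_nonneg (Vp k)
    nlinarith [mul_nonneg (mul_nonneg hκi0.le h3.le) hV,
      mul_nonneg (mul_nonneg (mul_nonneg hκi0.le hκi0.le) h3.le) hV,
      mul_le_mul_of_nonneg_right h1 hV, mul_le_mul_of_nonneg_right h2 hV,
      mul_nonneg h3.le hV]
  · -- upper bound
    rw [Finset.mul_sum]
    refine Finset.sum_le_sum fun k _ => ?_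
    rw [key]
    have h1 := hup k
    have h2 := hup' k
    have h3 := hpos k
    have hV := sq_nonneg (Vp k)
    nlinarith [mul_le_mul_of_nonneg_right h1 hV, mul_le_mul_of_nonneg_right h2 hV,
      mul_nonneg (mul_nonneg (mul_nonneg hκ0.le hκ0.le) h3.le) hV,
      mul_nonneg (mul_nonneg hκ0.le h3.le) hV, mul_nonneg h3.le hV]
  · -- positive definiteness
    intro hvne
    by_contra hle
    push_neg at hle
    -- all Vp k vanish on the window
    have hall : ∀ k ∈ Finset.Icc (-K + 1) K, Vp k = 0 := by
      intro k hk
      by_contra hVk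
      have hterm : 0 < hsz k * ((1 + oh k) * Vp k ^ 2) := by
        rw [key]
        have h1 := hpos (k - 1)
        have h2 := hpos k
        have h3 := hpos (k + 1)
        positivity
      have : 0 < ∑ j ∈ Finset.Icc (-K + 1) K, hsz j * ((1 + oh j) * Vp j ^ 2) :=
        Finset.sum_pos' (fun j _ => hnonneg j) ⟨k, hk, hterm⟩
      linarith
    -- nodal values equal their neighbors
    have hstep : ∀ k : ℤ, -K + 1 ≤ k → k ≤ K → v (L k) = v (L (k - 1)) := by
      intro k h1 h2
      have h0 := hall k (Finset.mem_Icc.mpr ⟨h1, h2⟩)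
      rw [hVp] at h0
      have := (hpos k).ne'
      field_simp at h0
      linarith
    have hnode0 : v (L 0) = 0 := by rw [hL0]; exact hv.2.1
    -- nodal values vanish on [-K, K]
    have up : ∀ n : ℕ, (n : ℤ) ≤ K → v (L n) = 0 := by
      intro n
      induction n with
      | zero => intro _; simpa using hnode0
      | succ m ih =>
          intro h
          have h' : ((m : ℤ) + 1) ≤ K := by exact_mod_cast h
          have := hstep ((m : ℤ) + 1) (by linarith) h'
          simp only [add_sub_cancel_right] at this
          have hm := ih (by linarith)
          push_cast
          rw [this]
          exact hm
    have down : ∀ n : ℕ, (n : ℤ) ≤ K → v (L (-n)) = 0 := by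
      intro n
      induction n with
      | zero => intro _; simpa using hnode0
      | succ m ih =>
          intro h
          have h' : ((m : ℤ) + 1) ≤ K := by exact_mod_cast h
          have := hstep (-(m : ℤ)) (by linarith) (by linarith)
          have hm := ih (by linarith)
          have hg : (-(((m + 1 : ℕ)) : ℤ)) = (-(m : ℤ)) - 1 := by push_cast; ring
          rw [hg, ← this]
          exact hm
    have hnode : ∀ k : ℤ, -K ≤ k → k ≤ K → v (L k) = 0 := by
      intro k h1 h2
      rcases le_or_gt 0 k with hk | hk
      · have : k = (k.toNat : ℤ) := (Int.toNat_of_nonneg hk).symm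
        rw [this]; exact up k.toNat (by rw [← this]; exact h2)
      · have hk' : 0 ≤ -k := by linarith
        have : k = -((-k).toNat : ℤ) := by
          rw [Int.toNat_of_nonneg hk']; ring
        rw [this]
        exact down (-k).toNat (by rw [Int.toNat_of_nonneg hk']; linarith)
    -- v vanishes on the interval [L (-K), L K]
    have hzero_n : ∀ n : ℕ, ∀ l : ℤ, -K + (n : ℤ) ≤ K →
        L (-K) ≤ l → l ≤ L (-K + n) → v l = 0 := by
      intro n
      induction n with
      | zero =>
          intro l _ h1 h2
          simp only [Nat.cast_zero, add_zero] at h2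
          have : l = L (-K) := le_antisymm h2 h1
          rw [this]
          exact hnode (-K) le_rfl (by linarith)
      | succ m ih =>
          intro l hn h1 h2
          rcases le_or_gt l (L (-K + m)) with h | h
          · exact ih l (by push_cast at hn ⊢; linarith) h1 h
          · set k : ℤ := -K + (m : ℤ) + 1 with hkdef
            have hk1 : L (k - 1) ≤ l := by
              have : k - 1 = -K + (m : ℤ) := by ring
              rw [this]; exact h.le
            have hk2 : l ≤ L k := by
              have : (-K + ((m : ℤ) + 1)) = k := by ring
              push_cast at h2
              rw [this] at h2; exact h2
            have hint := hv.2.2 k l hk1 hk2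
            have hz1 : v (L (k - 1)) = 0 := by
              refine hnode (k - 1) (by push_cast at hn; omega) (by push_cast at hn; omega)
            have hz2 : v (L k) = 0 := by
              refine hnode k (by push_cast at hn; omega) (by push_cast at hn; omega)
            rw [hz1, hz2] at hint
            simpa using hint
    have hLK : L K = L (-K) + 2 * N := by
      have h := hLper (-K)
      rw [show -K + 2 * K = K from by ring] at h
      exact h
    have hzero_int : ∀ l : ℤ, L (-K) ≤ l → l ≤ L K → v l = 0 := by
      intro l h1 h2
      have h2K : (0:ℤ) ≤ 2 * K := by linarith
      refine hzero_n (2 * K).toNat l ?_ h1 ?_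
      · rw [Int.toNat_of_nonneg h2K]; linarith
      · have : -K + ((2 * K).toNat : ℤ) = K := by rw [Int.toNat_of_nonneg h2K]; ring
        rw [this]; exact h2
    -- periodicity over all multiples
    have hper : ∀ m : ℤ, ∀ l : ℤ, v (l + 2 * N * m) = v l := by
      intro m
      induction m using Int.induction_on with
      | zero => intro l; simp
      | succ i ih =>
          intro l
          have : l + 2 * N * ((i : ℤ) + 1) = (l + 2 * N * i) + 2 * N := by ring
          rw [this, hv.1, ih]
      | pred i ih =>
          intro l
          have h1 := hv.1 (l + 2 * N * (-(i : ℤ) - 1))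
          rw [show l + 2 * N * (-(i : ℤ) - 1) + 2 * N = l + 2 * N * (-(i : ℤ)) from by ring] at h1
          rw [← h1]
          exact ih l
    -- conclude v = 0
    apply hvne
    funext l
    have hNpos : (0:ℤ) < 2 * N := by linarith
    set r : ℤ := (l - L (-K)) % (2 * N) with hr
    set q : ℤ := (l - L (-K)) / (2 * N) with hq
    have hdm : 2 * N * q + r = l - L (-K) := Int.mul_ediv_add_emod (l - L (-K)) (2 * N)
    have hr0 : 0 ≤ r := Int.emod_nonneg _ (by omega)
    have hr1 : r < 2 * N := Int.emod_lt_of_pos _ hNpos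
    have hl : l = (L (-K) + r) + 2 * N * q := by omega
    have : v l = v (L (-K) + r) := by rw [hl, hper q]
    rw [this]
    have := hzero_int (L (-K) + r) (by omega) (by rw [hLK]; omega)
    simpa using this
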